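/- Let a, b be distinct points of the open unit disk, not both on a line through 0, with |a| = |b|, and let m = (a+b)/2, s = |m|, t = |a−b|/2. Then with u = sinh(ρ(a,b)/2) = 2t/(1−s²−t²) (the hyperbolic metric), the quantity tan(v/2) where v = 2·arctan(t/(1−s)) satisfies tan(v/2) = (1+s)u/(1 + √(1 + (1−s²)u²)). -/

import Mathlib

open Complex

lemma aux_tan_half (s t : ℝ) (hs : 0 ≤ s) (hs1 : s < 1) (ht : 0 < t)
    (hD : s ^ 2 + t ^ 2 < 1) :
    Real.tan (2 * Real.arctan (t / (1 - s)) / 2) =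
      (1 + s) * (2 * t / (1 - s ^ 2 - t ^ 2)) /
        (1 + Real.sqrt (1 + (1 - s ^ 2) * (2 * t / (1 - s ^ 2 - t ^ 2)) ^ 2)) := by
  have hDpos : 0 < 1 - s ^ 2 - t ^ 2 := by linarith
  have hs2 : 0 < 1 - s ^ 2 := by nlinarith
  have hsq : Real.sqrt (1 + (1 - s ^ 2) * (2 * t / (1 - s ^ 2 - t ^ 2)) ^ 2) =
      (1 - s ^ 2 + t ^ 2) / (1 - s ^ 2 - t ^ 2) := by
    rw [show 1 + (1 - s ^ 2) * (2 * t / (1 - s ^ 2 - t ^ 2)) ^ 2 =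
        ((1 - s ^ 2 + t ^ 2) / (1 - s ^ 2 - t ^ 2)) ^ 2 by
      field_simp; ring]
    exact Real.sqrt_sq (by positivity)
  rw [hsq, show 2 * Real.arctan (t / (1 - s)) / 2 = Real.arctan (t / (1 - s)) by ring,
    Real.tan_arctan]
  have h1s : (1 : ℝ) - s ≠ 0 := by linarith
  have hden : 1 + (1 - s ^ 2 + t ^ 2) / (1 - s ^ 2 - t ^ 2) ≠ 0 := by
    rw [show (1 : ℝ) + (1 - s ^ 2 + t ^ 2) / (1 - s ^ 2 - t ^ 2) =
        2 * (1 - s ^ 2) / (1 - s ^ 2 - t ^ 2) by field_simp; ring]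
    positivity
  field_simp
  ring

theorem tan_half_vam_equal_moduli (a b : ℂ)
    (ha : ‖a‖ < 1) (hb : ‖b‖ < 1) (hab : a ≠ b)
    (heq : ‖a‖ = ‖b‖)
    (hnc : ¬ Collinear ℝ ({0, a, b} : Set ℂ)) :
    let m := (a + b) / 2
    let s := ‖m‖
    let t := ‖a - b‖ / 2
    let u := 2 * t / (1 - s ^ 2 - t ^ 2)
    let v := 2 * Real.arctan (t / (1 - s))
    Real.tan (v / 2) = (1 + s) * u / (1 + Real.sqrt (1 + (1 - s ^ 2) * u ^ 2)) := by
  intro m s t u v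
  have hmdef : s = ‖a + b‖ / 2 := by
    simp only [s, m, norm_div, Complex.norm_two]
  have htpos : 0 < t := by
    have : 0 < ‖a - b‖ := norm_pos_iff.mpr (sub_ne_zero.mpr hab)
    simp only [t]
    linarith
  have hspos : 0 ≤ s := by positivity
  have hpar : s ^ 2 + t ^ 2 = ‖a‖ ^ 2 := by
    have hb2 : ‖b‖ ^ 2 = ‖a‖ ^ 2 := by rw [heq]
    have h1 : ‖a + b‖ ^ 2 = Complex.normSq (a + b) := Complex.sq_norm _
    have h2 : ‖a - b‖ ^ 2 = Complex.normSq (a - b) := Complex.sq_norm _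
    have h3 : ‖a‖ ^ 2 = Complex.normSq a := Complex.sq_norm a
    have h4 : ‖b‖ ^ 2 = Complex.normSq b := Complex.sq_norm b
    have key : Complex.normSq (a + b) + Complex.normSq (a - b) =
        2 * Complex.normSq a + 2 * Complex.normSq b := by
      simp only [Complex.normSq_apply, Complex.add_re, Complex.add_im,
        Complex.sub_re, Complex.sub_im]
      ring
    rw [hmdef]
    simp only [t, div_pow]
    nlinarith [key, h1, h2, h3, h4, hb2]
  have hD : s ^ 2 + t ^ 2 < 1 := by
    rw [hpar]; nlinarith [norm_nonneg a]
  have hs1 : s < 1 := by nlinarith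
  exact aux_tan_half s t hspos hs1 htpos hD
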